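/- arXiv:2605.06269 — 4 statements merged into one kernel-verified Lean document; each statement's English description precedes it below -/
import Mathlib

section
/- Let x, y, x', y', u, v : List α. Then u and v are conjugate if and only if there exist a constant C : ℕ and an infinite set I ⊆ ℕ such that for every k ∈ I, levenshtein (x ++ u^k ++ y) (x' ++ v^k ++ y') ≤ C. (Proposition on conjugacy for the Levenshtein metric.) -/
set_option linter.unusedSectionVars false
set_option maxHeartbeats 1000000

/-- `wpow u k` is the k-fold concatenation `u ++ u ++ ⋯ ++ u` (k copies). -/
def wpow {α : Type*} (u : List α) (k : ℕ) : List α := (List.replicate k u).flatten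

/-- Levenshtein edit distance, as formerly in Mathlib (`Mathlib/Data/List/EditDistance/Defs.lean`),
which has since been removed from Mathlib; reproduced here with its old meaning. -/
structure Levenshtein.Cost (α β δ : Type*) where
  delete : α → δ
  insert : β → δ
  substitute : α → β → δ

def Levenshtein.defaultCost {α : Type*} [DecidableEq α] : Levenshtein.Cost α α ℕ where
  delete _ := 1
  insert _ := 1
  substitute a b := if a = b then 0 else 1

def Levenshtein.impl {α β δ : Type*} [AddZeroClass δ] [Min δ] (C : Levenshtein.Cost α β δ)
    (xs : List α) (y : β) (d : {r : List δ // 0 < r.length}) : {r : List δ // 0 < r.length} :=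
  let ⟨ds, w⟩ := d
  xs.zip (ds.zip ds.tail) |>.foldr
    (init := ⟨[C.insert y + ds.getLast (List.ne_nil_of_length_pos w)], by simp⟩)
    (fun ⟨x, d₀, d₁⟩ ⟨r, w⟩ =>
      ⟨min (C.delete x + r[0]) (min (C.insert y + d₀) (C.substitute x y + d₁)) :: r, by simp⟩)

def suffixLevenshtein {α β δ : Type*} [AddZeroClass δ] [Min δ] (C : Levenshtein.Cost α β δ)
    (xs : List α) (ys : List β) : {r : List δ // 0 < r.length} :=
  ys.foldr
    (Levenshtein.impl C xs)
    (xs.foldr (init := ⟨[0], by simp⟩)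
      (fun a ⟨ds, w⟩ => ⟨(C.delete a + ds[0]) :: ds, by simp⟩))

def levenshtein {α β δ : Type*} [AddZeroClass δ] [Min δ] (C : Levenshtein.Cost α β δ)
    (xs : List α) (ys : List β) : δ :=
  let ⟨r, w⟩ := suffixLevenshtein C xs ys
  r[0]

@[simp] theorem Levenshtein.defaultCost_delete {α : Type*} [DecidableEq α] (a : α) :
    (Levenshtein.defaultCost : Levenshtein.Cost α α ℕ).delete a = 1 := rfl

@[simp] theorem Levenshtein.defaultCost_insert {α : Type*} [DecidableEq α] (a : α) :
    (Levenshtein.defaultCost : Levenshtein.Cost α α ℕ).insert a = 1 := rfl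

@[simp] theorem Levenshtein.defaultCost_substitute {α : Type*} [DecidableEq α] (a b : α) :
    (Levenshtein.defaultCost : Levenshtein.Cost α α ℕ).substitute a b = if a = b then 0 else 1 :=
  rfl

section LevAPI
variable {α β δ : Type*} [AddZeroClass δ] [Min δ] (C : Levenshtein.Cost α β δ)

theorem Levenshtein.impl_cons' (x : α) (xs : List α) (y : β) (d : δ) (ds : List δ) (w)
    (w' : 0 < ds.length) :
    Levenshtein.impl C (x :: xs) y ⟨d :: ds, w⟩ =
      ⟨min (C.delete x + (Levenshtein.impl C xs y ⟨ds, w'⟩).1[0]'(Levenshtein.impl C xs y ⟨ds, w'⟩).2)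
        (min (C.insert y + d) (C.substitute x y + ds[0])) :: (Levenshtein.impl C xs y ⟨ds, w'⟩).1,
        by simp⟩ :=
  match ds, w' with | _ :: _, _ => rfl

theorem suffixLevenshtein_cons₂' (xs : List α) (y : β) (ys : List β) :
    suffixLevenshtein C xs (y :: ys) = Levenshtein.impl C xs y (suffixLevenshtein C xs ys) := rfl

theorem levenshtein_eq' (xs : List α) (ys : List β) :
    levenshtein C xs ys = (suffixLevenshtein C xs ys).1[0]'(suffixLevenshtein C xs ys).2 := rfl

theorem suffixLevenshtein_cons₁' (x : α) (xs : List α) (ys : List β) :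
    suffixLevenshtein C (x :: xs) ys =
      ⟨levenshtein C (x :: xs) ys :: (suffixLevenshtein C xs ys).1, by simp⟩ := by
  induction ys with
  | nil => rfl
  | cons y ys ih =>
    apply Subtype.ext
    have key : (suffixLevenshtein C (x :: xs) (y :: ys)).1.tail
        = (suffixLevenshtein C xs (y :: ys)).1 := by
      rw [suffixLevenshtein_cons₂', ih, Levenshtein.impl_cons' (w' := (suffixLevenshtein C xs ys).2)]
      rfl
    rw [← key, levenshtein_eq' C (x :: xs) (y :: ys)]
    generalize suffixLevenshtein C (x :: xs) (y :: ys) = s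
    obtain ⟨_ | ⟨a, l⟩, h⟩ := s
    · simp at h
    · rfl

theorem levenshtein_cons_cons (x : α) (xs : List α) (y : β) (ys : List β) :
    levenshtein C (x :: xs) (y :: ys) =
      min (C.delete x + levenshtein C xs (y :: ys))
        (min (C.insert y + levenshtein C (x :: xs) ys)
          (C.substitute x y + levenshtein C xs ys)) := by
  rw [levenshtein_eq' C (x :: xs) (y :: ys)]
  simp only [suffixLevenshtein_cons₂', suffixLevenshtein_cons₁',
    Levenshtein.impl_cons' (w' := (suffixLevenshtein C xs ys).2)]
  rfl

theorem suffixLevenshtein_nil'' (ys : List β) :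
    (suffixLevenshtein C [] ys).1 = [levenshtein C [] ys] := by
  cases ys <;> rfl

@[simp] theorem levenshtein_nil_nil : levenshtein C [] [] = 0 := rfl

@[simp] theorem levenshtein_nil_cons (y : β) (ys : List β) :
    levenshtein C [] (y :: ys) = C.insert y + levenshtein C [] ys := by
  have h : ∀ (l : List δ) (hl : 0 < l.length), l = [levenshtein C [] ys] →
      l.getLast (List.ne_nil_of_length_pos hl) = levenshtein C [] ys := by
    rintro l hl rfl; rfl
  exact congrArg (C.insert y + ·) (h _ (suffixLevenshtein C [] ys).2 (suffixLevenshtein_nil'' C ys))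

@[simp] theorem levenshtein_cons_nil (x : α) (xs : List α) :
    levenshtein C (x :: xs) [] = C.delete x + levenshtein C xs [] := rfl

end LevAPI

section Aux
variable {α : Type*} [DecidableEq α]

local notation "L" => levenshtein (Levenshtein.defaultCost : Levenshtein.Cost α α ℕ)

private theorem lev_nil_left (t : List α) : L [] t = t.length := by
  induction t with
  | nil => simp
  | cons b t ih => simp [ih]; omega

private theorem lev_nil_right (s : List α) : L s [] = s.length := by
  induction s with
  | nil => simp
  | cons a s ih => simp [ih]; omega

private theorem lev_del_le (a : α) (s t : List α) : L (a :: s) t ≤ 1 + L s t := by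
  cases t with
  | nil => simp [lev_nil_right]
  | cons b t => rw [levenshtein_cons_cons]; exact le_trans (min_le_left _ _) (by simp)

private theorem lev_ins_le (b : α) (s t : List α) : L s (b :: t) ≤ 1 + L s t := by
  cases s with
  | nil => simp [lev_nil_left]
  | cons a s =>
    rw [levenshtein_cons_cons]
    exact le_trans (le_trans (min_le_right _ _) (min_le_left _ _)) (by simp)

private theorem lev_match_le (a : α) (s t : List α) : L (a :: s) (a :: t) ≤ L s t := by
  rw [levenshtein_cons_cons]
  exact le_trans (le_trans (min_le_right _ _) (min_le_right _ _)) (by simp)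

private theorem lev_delAll_le (A s t : List α) : L (A ++ s) t ≤ A.length + L s t := by
  induction A with
  | nil => simp
  | cons a A ih =>
    calc L (a :: (A ++ s)) t ≤ 1 + L (A ++ s) t := lev_del_le _ _ _
    _ ≤ 1 + (A.length + L s t) := by omega
    _ = (a :: A).length + L s t := by simp; omega

private theorem lev_insAll_le (B s t : List α) : L s (B ++ t) ≤ B.length + L s t := by
  induction B with
  | nil => simp
  | cons b B ih =>
    calc L s (b :: (B ++ t)) ≤ 1 + L s (B ++ t) := lev_ins_le _ _ _
    _ ≤ 1 + (B.length + L s t) := by omega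
    _ = (b :: B).length + L s t := by simp; omega

private theorem lev_prefix_le (m s t : List α) : L (m ++ s) (m ++ t) ≤ L s t := by
  induction m with
  | nil => simp
  | cons c m ih => exact le_trans (lev_match_le c _ _) ih

private theorem lev_le_lengths (s t : List α) : L s t ≤ s.length + t.length := by
  have h1 : L (s ++ []) t ≤ s.length + L ([] : List α) t := lev_delAll_le s [] t
  simp [lev_nil_left] at h1
  exact h1

private theorem lev_pad (m A B A' B' : List α) :
    L (A ++ m ++ B) (A' ++ (m ++ B')) ≤ A.length + A'.length + B.length + B'.length := by
  have h1 : L (A ++ (m ++ B)) (A' ++ (m ++ B')) ≤ A.length + L (m ++ B) (A' ++ (m ++ B')) :=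
    lev_delAll_le _ _ _
  have h2 : L (m ++ B) (A' ++ (m ++ B')) ≤ A'.length + L (m ++ B) (m ++ B') := lev_insAll_le _ _ _
  have h3 : L (m ++ B) (m ++ B') ≤ L B B' := lev_prefix_le _ _ _
  have h4 : L B B' ≤ B.length + B'.length := lev_le_lengths _ _
  rw [List.append_assoc]
  omega

private theorem lev_len_lower (s t : List α) :
    t.length ≤ s.length + L s t ∧ s.length ≤ t.length + L s t := by
  induction s generalizing t with
  | nil => simp [lev_nil_left]
  | cons a s ihs =>
    induction t with
    | nil => simp [lev_nil_right]
    | cons b t iht =>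
      rw [levenshtein_cons_cons]
      obtain ⟨h1, h2⟩ := ihs (b :: t)
      obtain ⟨h3, h4⟩ := iht
      obtain ⟨h5, h6⟩ := ihs t
      rcases min_cases (Levenshtein.defaultCost.delete a + L s (b :: t))
        (min (Levenshtein.defaultCost.insert b + L (a :: s) t)
          (Levenshtein.defaultCost.substitute a b + L s t)) with ⟨heq, _⟩ | ⟨heq, _⟩
      · rw [heq]; simp at *; omega
      · rw [heq]
        rcases min_cases (Levenshtein.defaultCost.insert b + L (a :: s) t)
          (Levenshtein.defaultCost.substitute a b + L s t) with ⟨heq2, _⟩ | ⟨heq2, _⟩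
        · rw [heq2]; simp at *; omega
        · rw [heq2]; by_cases hab : a = b <;> simp [hab] at * <;> omega

private theorem lev_peel (c : ℕ) (s t : List α) (h : L s t ≤ c) :
    s = t ∨ ∃ (w s₁ t₁ s₂ t₂ : List α), s = w ++ s₁ ∧ t = w ++ t₁ ∧
      s₂ <:+ s₁ ∧ t₂ <:+ t₁ ∧ s₁.length ≤ s₂.length + 1 ∧ L s₂ t₂ + 1 ≤ c := by
  induction s generalizing t with
  | nil =>
    cases t with
    | nil => exact Or.inl rfl
    | cons b t' =>
      refine Or.inr ⟨[], [], b :: t', [], t', by simp, by simp, List.suffix_refl _,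
        List.suffix_cons b t', by simp, ?_⟩
      have : L ([] : List α) (b :: t') = L ([] : List α) t' + 1 := by
        simp [lev_nil_left]; omega
      omega
  | cons a s' ih =>
    cases t with
    | nil =>
      refine Or.inr ⟨[], a :: s', [], s', [], by simp, by simp, List.suffix_cons a s',
        List.suffix_refl _, by simp, ?_⟩
      have : L (a :: s') ([] : List α) = L s' ([] : List α) + 1 := by
        simp [lev_nil_right]; omega
      omega
    | cons b t' =>
      rw [levenshtein_cons_cons] at h
      rcases min_le_iff.mp h with hd | h2
      · refine Or.inr ⟨[], a :: s', b :: t', s', b :: t', by simp, by simp,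
          List.suffix_cons a s', List.suffix_refl _, by simp, ?_⟩
        simp at hd; omega
      · rcases min_le_iff.mp h2 with hi | hs
        · refine Or.inr ⟨[], a :: s', b :: t', a :: s', t', by simp, by simp,
            List.suffix_refl _, List.suffix_cons b t', by simp, ?_⟩
          simp at hi; omega
        · by_cases hab : a = b
          · subst hab
            rw [Levenshtein.defaultCost_substitute, if_pos rfl, Nat.zero_add] at hs
            rcases ih t' hs with heq | ⟨w, s₁, t₁, s₂, t₂, e1, e2, su, tu, hl, hc⟩
            · exact Or.inl (by rw [heq])
            · exact Or.inr ⟨a :: w, s₁, t₁, s₂, t₂, by simp [e1], by simp [e2], su, tu, hl, hc⟩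
          · refine Or.inr ⟨[], a :: s', b :: t', s', t', by simp, by simp,
              List.suffix_cons a s', List.suffix_cons b t', by simp, ?_⟩
            rw [Levenshtein.defaultCost_substitute, if_neg hab] at hs; omega

private theorem lev_common_infix (c : ℕ) : ∀ (s t : List α), L s t ≤ c →
    ∃ w, w <:+: s ∧ w <:+: t ∧ s.length ≤ (c + 1) * w.length + c := by
  induction c using Nat.strong_induction_on with
  | _ c IH =>
    intro s t h
    rcases lev_peel c s t h with rfl | ⟨w, s₁, t₁, s₂, t₂, rfl, rfl, su, tu, hl, hc⟩
    · refine ⟨s, List.infix_refl _, List.infix_refl _, ?_⟩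
      have : 1 * s.length ≤ (c + 1) * s.length := Nat.mul_le_mul_right _ (by omega)
      omega
    · obtain ⟨c', rfl⟩ : ∃ c', c = c' + 1 := ⟨c - 1, by omega⟩
      have hc' : L s₂ t₂ ≤ c' := by omega
      obtain ⟨w₂, hw₂s, hw₂t, hlen⟩ := IH c' (by omega) s₂ t₂ hc'
      have hs1 : s₁ <:+: w ++ s₁ := ⟨w, [], by simp⟩
      have ht1 : t₁ <:+: w ++ t₁ := ⟨w, [], by simp⟩
      have hw2s : w₂ <:+: w ++ s₁ := (hw₂s.trans su.isInfix).trans hs1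
      have hw2t : w₂ <:+: w ++ t₁ := (hw₂t.trans tu.isInfix).trans ht1
      have hws : w <:+: w ++ s₁ := ⟨[], s₁, by simp⟩
      have hwt : w <:+: w ++ t₁ := ⟨[], t₁, by simp⟩
      have hsulen : s₂.length ≤ s₁.length := su.length_le
      have key : (w ++ s₁).length = w.length + s₁.length := by simp
      have e1 : (c' + 1 + 1) * w.length = (c' + 1) * w.length + w.length := by ring
      have e2 : (c' + 1 + 1) * w₂.length = (c' + 1) * w₂.length + w₂.length := by ring
      by_cases hcmp : w₂.length ≤ w.length
      · refine ⟨w, hws, hwt, ?_⟩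
        have h2 : (c' + 1) * w₂.length ≤ (c' + 1) * w.length := Nat.mul_le_mul_left _ hcmp
        omega
      · refine ⟨w₂, hw2s, hw2t, ?_⟩
        have h2 : w.length ≤ w₂.length := by omega
        omega

private theorem infix_cut_left (w x r : List α) (h : w <:+: x ++ r) :
    ∃ w', w' <:+: w ∧ w' <:+: r ∧ w.length ≤ x.length + w'.length := by
  obtain ⟨a, b, hab⟩ := h
  have ha : a <+: x ++ r := ⟨w ++ b, by rw [← hab]; simp⟩
  rcases List.prefix_or_prefix_of_prefix ha (List.prefix_append x r) with hax | hxa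
  · obtain ⟨x', rfl⟩ := hax
    have hwb : w ++ b = x' ++ r := by
      have h2 : a ++ (w ++ b) = a ++ (x' ++ r) := by
        simpa [List.append_assoc] using hab
      exact List.append_cancel_left h2
    have hx'p : x' <+: w ++ b := ⟨r, hwb.symm⟩
    rcases List.prefix_or_prefix_of_prefix (List.prefix_append w b) hx'p with hwx | hxw
    · refine ⟨[], List.nil_infix, List.nil_infix, ?_⟩
      have := hwx.length_le
      simp at this ⊢; omega
    · obtain ⟨w'', rfl⟩ := hxw
      have hr : w'' ++ b = r := by
        have h2 : x' ++ (w'' ++ b) = x' ++ r := by rw [← hwb]; simp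
        exact List.append_cancel_left h2
      refine ⟨w'', (List.suffix_append x' w'').isInfix, ⟨[], b, by simp [hr]⟩, by simp⟩
  · obtain ⟨a', rfl⟩ := hxa
    refine ⟨w, List.infix_refl _, ⟨a', b, ?_⟩, by omega⟩
    have h2 : x ++ (a' ++ (w ++ b)) = x ++ r := by rw [← hab]; simp
    simpa using List.append_cancel_left h2

private theorem infix_cut_right (w r y : List α) (h : w <:+: r ++ y) :
    ∃ w', w' <:+: w ∧ w' <:+: r ∧ w.length ≤ w'.length + y.length := by
  have h2 : w.reverse <:+: y.reverse ++ r.reverse := by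
    rw [← List.reverse_append]; exact List.reverse_infix.mpr h
  obtain ⟨w', h1, h3, h4⟩ := infix_cut_left w.reverse y.reverse r.reverse h2
  refine ⟨w'.reverse, ?_, ?_, ?_⟩
  · have := List.reverse_infix.mpr h1; simpa using this
  · have := List.reverse_infix.mpr h3; simpa using this
  · simp at h4 ⊢; omega

private theorem infix_cut (w x z y : List α) (h : w <:+: x ++ z ++ y) :
    ∃ w', w' <:+: w ∧ w' <:+: z ∧ w.length ≤ x.length + w'.length + y.length := by
  rw [List.append_assoc] at h
  obtain ⟨w1, hw1w, hw1, hl1⟩ := infix_cut_left w x (z ++ y) h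
  obtain ⟨w2, hw2w, hw2, hl2⟩ := infix_cut_right w1 z y hw1
  exact ⟨w2, hw2w.trans hw1w, hw2, by omega⟩

private theorem wpow_zero (u : List α) : wpow u 0 = [] := rfl

private theorem wpow_succ (u : List α) (k : ℕ) : wpow u (k + 1) = u ++ wpow u k := by
  simp [wpow, List.replicate_succ]

private theorem wpow_add (u : List α) (a b : ℕ) : wpow u (a + b) = wpow u a ++ wpow u b := by
  induction a with
  | zero => simp [wpow_zero]
  | succ a ih => rw [Nat.succ_add, wpow_succ, wpow_succ, ih, List.append_assoc]

private theorem wpow_succ' (u : List α) (k : ℕ) : wpow u (k + 1) = wpow u k ++ u := by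
  rw [wpow_add]; simp [wpow]

private theorem wpow_length (u : List α) (k : ℕ) : (wpow u k).length = k * u.length := by
  induction k with
  | zero => simp [wpow_zero]
  | succ k ih => rw [wpow_succ]; simp [ih]; ring

private theorem rot_pow (u : List α) (j : ℕ) (hj : j ≤ u.length) (m : ℕ) :
    u.drop j ++ wpow u m = wpow (u.rotate j) m ++ u.drop j := by
  induction m with
  | zero => simp [wpow_zero]
  | succ m ih =>
    rw [wpow_succ, wpow_succ]
    rw [List.rotate_eq_drop_append_take hj] at ih ⊢
    nth_rewrite 2 [← List.take_append_drop j u]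
    simp only [List.append_assoc]
    rw [ih]

private theorem pow_infix_rot (u z : List α) (k : ℕ) (hn : 0 < u.length)
    (hz : z <:+: wpow u k) (hlen : z.length = 2 * u.length) :
    ∃ r, u.IsRotated r ∧ r.length = u.length ∧ z = r ++ r := by
  obtain ⟨a, b, hab⟩ := hz
  obtain ⟨q, j, hdm, hjn⟩ : ∃ q j, u.length * q + j = a.length ∧ j < u.length :=
    ⟨a.length / u.length, a.length % u.length, Nat.div_add_mod _ _, Nat.mod_lt _ hn⟩
  have hjle : j ≤ u.length := le_of_lt hjn
  have htot : a.length + z.length + b.length = k * u.length := by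
    have h := congrArg List.length hab
    simp [wpow_length] at h
    omega
  have hqk : q + 2 ≤ k := by
    have h2 : (q + 2) * u.length ≤ k * u.length := by
      calc (q + 2) * u.length = u.length * q + 2 * u.length := by ring
        _ ≤ a.length + z.length := by omega
        _ ≤ k * u.length := by omega
    exact Nat.le_of_mul_le_mul_right h2 hn
  obtain ⟨K', hkq, hK1⟩ : ∃ K', k = q + (K' + 1) ∧ 1 ≤ K' := ⟨k - q - 1, by omega, by omega⟩
  have h1 : z ++ b = (wpow u k).drop a.length := by
    rw [← hab, List.append_assoc, List.drop_left]
  have h2 : (wpow u k).drop a.length = (wpow u (K' + 1)).drop j := by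
    rw [hkq, wpow_add, List.drop_append]
    have hlq : (wpow u q).length = u.length * q := by rw [wpow_length]; ring
    have e1 : a.length - (wpow u q).length = j := by omega
    have e2 : (wpow u q).drop a.length = [] := by
      apply List.drop_eq_nil_of_le; omega
    rw [e1, e2, List.nil_append]
  have h3 : (wpow u (K' + 1)).drop j = u.drop j ++ wpow u K' := by
    rw [wpow_succ, List.drop_append]
    have e : j - u.length = 0 := by omega
    simp [e]
  have key : z ++ (b ++ u.take j) = wpow (u.rotate j) (K' + 1) := by
    have h4 : z ++ b = wpow (u.rotate j) K' ++ u.drop j := by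
      rw [h1, h2, h3]
      exact rot_pow u j hjle K'
    calc z ++ (b ++ u.take j) = (z ++ b) ++ u.take j := by rw [List.append_assoc]
      _ = wpow (u.rotate j) K' ++ (u.drop j ++ u.take j) := by rw [h4, List.append_assoc]
      _ = wpow (u.rotate j) K' ++ u.rotate j := by rw [List.rotate_eq_drop_append_take hjle]
      _ = wpow (u.rotate j) (K' + 1) := (wpow_succ' _ _).symm
  have hzp : z <+: wpow (u.rotate j) (K' + 1) := ⟨b ++ u.take j, key⟩
  have hrl : (u.rotate j).length = u.length := by simp
  refine ⟨u.rotate j, ⟨j, rfl⟩, hrl, ?_⟩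
  obtain ⟨m, hm⟩ : ∃ m, K' + 1 = 2 + m := ⟨K' - 1, by omega⟩
  rw [hm, wpow_add] at hzp
  have hw2 : wpow (u.rotate j) 2 = u.rotate j ++ u.rotate j := by
    rw [show (2:ℕ) = 1 + 1 from rfl, wpow_add]; simp [wpow]
  rw [hw2] at hzp
  have hzt := List.prefix_iff_eq_take.mp hzp
  rw [hzt, List.append_assoc]
  have hlen2 : z.length = (u.rotate j).length + (u.rotate j).length := by
    rw [hrl]; omega
  rw [hlen2, ← List.length_append, ← List.append_assoc, List.take_left]

private theorem wpow_conj (p q : List α) (k : ℕ) :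
    p ++ wpow (q ++ p) k = wpow (p ++ q) k ++ p := by
  induction k with
  | zero => simp [wpow_zero]
  | succ k ih =>
    rw [wpow_succ, wpow_succ]
    calc p ++ ((q ++ p) ++ wpow (q ++ p) k) = (p ++ q) ++ (p ++ wpow (q ++ p) k) := by
          simp [List.append_assoc]
      _ = (p ++ q) ++ (wpow (p ++ q) k ++ p) := by rw [ih]
      _ = (p ++ q) ++ wpow (p ++ q) k ++ p := by simp [List.append_assoc]

private theorem wpow_conj' (p q : List α) (k : ℕ) :
    wpow (p ++ q) (k + 1) = p ++ wpow (q ++ p) k ++ q := by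
  rw [show p ++ wpow (q ++ p) k ++ q = (p ++ wpow (q ++ p) k) ++ q from rfl, wpow_conj,
    List.append_assoc, wpow_succ']

end Aux

theorem stmt_0 {α : Type*} [DecidableEq α] (x y x' y' u v : List α) :
    List.IsRotated u v ↔
      ∃ (C : ℕ) (I : Set ℕ), I.Infinite ∧ ∀ k ∈ I,
        levenshtein Levenshtein.defaultCost (x ++ wpow u k ++ y) (x' ++ wpow v k ++ y') ≤ C := by
  constructor
  · -- forward
    intro hrot
    obtain ⟨p, q, rfl, rfl⟩ : ∃ p q, u = p ++ q ∧ v = q ++ p := by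
      obtain ⟨m, hm⟩ := hrot
      by_cases hu : u = []
      · subst hu
        refine ⟨[], [], by simp, ?_⟩
        rw [← hm, List.rotate_nil]; simp
      · have hul : 0 < u.length := List.length_pos_iff.mpr hu
        have hml : m % u.length ≤ u.length := le_of_lt (Nat.mod_lt _ hul)
        refine ⟨u.take (m % u.length), u.drop (m % u.length),
          (List.take_append_drop _ _).symm, ?_⟩
        rw [← hm, ← List.rotate_mod, List.rotate_eq_drop_append_take hml]
    refine ⟨x.length + x'.length + y.length + y'.length +
      2 * (p.length + q.length) + 2, Set.univ, Set.infinite_univ, ?_⟩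
    intro k _
    cases k with
    | zero =>
      simp only [wpow_zero, List.append_nil]
      have := lev_le_lengths (α := α) (x ++ ([] : List α) ++ y) (x' ++ ([] : List α) ++ y')
      simp at this ⊢
      omega
    | succ k =>
      have e1 : x ++ wpow (p ++ q) (k + 1) ++ y
          = (x ++ p) ++ wpow (q ++ p) k ++ (q ++ y) := by
        rw [wpow_conj']; simp [List.append_assoc]
      have e2 : x' ++ wpow (q ++ p) (k + 1) ++ y'
          = (x' ++ (q ++ p)) ++ (wpow (q ++ p) k ++ y') := by
        rw [wpow_succ]; simp [List.append_assoc]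
      rw [e1, e2]
      have := lev_pad (wpow (q ++ p) k) (x ++ p) (q ++ y) (x' ++ (q ++ p)) y'
      simp at this ⊢
      omega
  · -- backward
    rintro ⟨C, I, hI, hall⟩
    have hbig : ∀ N : ℕ, ∃ k ∈ I, N ≤ k := by
      intro N
      obtain ⟨k, hk1, hk2⟩ := hI.exists_notMem_finite (Set.finite_Iio N)
      exact ⟨k, hk1, by simpa using hk2⟩
    have hlen_eq : u.length = v.length := by
      by_contra hne
      obtain ⟨k, hkI, hk⟩ := hbig (C + (x.length + y.length + x'.length + y'.length) + 1)
      have hb := hall k hkI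
      obtain ⟨h1, h2⟩ := lev_len_lower (x ++ wpow u k ++ y) (x' ++ wpow v k ++ y')
      simp [wpow_length] at h1 h2 hb
      rcases Nat.lt_or_ge u.length v.length with hlt | hge
      · have h3 : k * u.length + k ≤ k * v.length := by
          have h4 := Nat.mul_le_mul_left k (show u.length + 1 ≤ v.length by omega)
          calc k * u.length + k = k * (u.length + 1) := by ring
            _ ≤ k * v.length := h4
        omega
      · have hlt : v.length < u.length := by omega
        have h3 : k * v.length + k ≤ k * u.length := by
          have h4 := Nat.mul_le_mul_left k (show v.length + 1 ≤ u.length by omega)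
          calc k * v.length + k = k * (v.length + 1) := by ring
            _ ≤ k * u.length := h4
        omega
    by_cases hu0 : u.length = 0
    · have hu : u = [] := List.length_eq_zero_iff.mp hu0
      have hv : v = [] := List.length_eq_zero_iff.mp (by omega)
      rw [hu, hv]
    · have hn : 0 < u.length := by omega
      set P := x.length + y.length + x'.length + y'.length with hP
      obtain ⟨k, hkI, hk⟩ := hbig ((C + 1) * (2 * u.length + P + 1) + C)
      have hb := hall k hkI
      obtain ⟨w, hws, hwt, hwlen⟩ := lev_common_infix C _ _ hb
      have hslen : (x ++ wpow u k ++ y).length = x.length + k * u.length + y.length := by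
        simp [wpow_length]; omega
      have hk_le : k ≤ k * u.length := Nat.le_mul_of_pos_right k hn
      have hwbig : 2 * u.length + P + 1 ≤ w.length := by
        have h5 : (C + 1) * (2 * u.length + P + 1) ≤ (C + 1) * w.length := by omega
        exact Nat.le_of_mul_le_mul_left h5 (by omega)
      obtain ⟨w1, hw1w, hw1u, hl1⟩ := infix_cut w x (wpow u k) y hws
      obtain ⟨w2, hw2w1, hw2v, hl2⟩ := infix_cut w1 x' (wpow v k) y' (hw1w.trans hwt)
      have hw2u : w2 <:+: wpow u k := hw2w1.trans hw1u
      have hw2len : 2 * u.length ≤ w2.length := by omega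
      set z := w2.take (2 * u.length) with hz
      have hzlen : z.length = 2 * u.length := by
        rw [hz, List.length_take]; omega
      have hzu : z <:+: wpow u k := (List.take_prefix _ _).isInfix.trans hw2u
      have hzv : z <:+: wpow v k := (List.take_prefix _ _).isInfix.trans hw2v
      obtain ⟨r, hur, hrl, hzr⟩ := pow_infix_rot u z k hn hzu hzlen
      obtain ⟨r', hvr', hrl', hzr'⟩ := pow_infix_rot v z k (by omega) hzv (by omega)
      have he : r ++ r = r' ++ r' := by rw [← hzr, ← hzr']
      have hrr : r = r' := (List.append_inj he (by omega)).1
      rw [hrr] at hur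
      exact hur.trans hvr'.symm
end

section
/- Let ι and κ be finite nonempty types, let (D i, f i) for i : ι and (E j, g j) for j : κ be families of partial word functions, and let R and S be the word relations they define: R u = {v | ∃ i, u ∈ D i ∧ v = f i u} and S u = {v | ∃ j, u ∈ E j ∧ v = g j u}. If dom R = dom S, then D(R, S) = max (⨆ i, →d(f i, S)) (⨆ j, →d(g j, R)), i.e., the distance between R and S equals the maximum over all components of the relative distances →d(f i, S) and →d(g j, R). -/
open scoped Classical

/-- The domain of a word relation. -/
def dom {A B : Type*} (R : List A → Set (List B)) : Set (List A) := {u | (R u).Nonempty}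

/-- Directed distance between two sets of words. -/
noncomputable def dirDist {B : Type*} (d : List B → List B → ℕ∞) (L L' : Set (List B)) : ℕ∞ :=
  ⨆ v ∈ L, ⨅ v' ∈ L', d v v'

/-- Hausdorff distance between two sets of words. -/
noncomputable def hausDist {B : Type*} (d : List B → List B → ℕ∞) (L L' : Set (List B)) : ℕ∞ :=
  max (dirDist d L L') (dirDist d L' L)

/-- Distance between two word relations. -/
noncomputable def relDist {A B : Type*} (d : List B → List B → ℕ∞)
    (R S : List A → Set (List B)) : ℕ∞ :=
  if dom R = dom S then ⨆ u ∈ dom R, hausDist d (R u) (S u) else ⊤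

/-- Relative distance from a partial word function `(Df, f)` to a word relation `S`. -/
noncomputable def relativeDist {A B : Type*} (d : List B → List B → ℕ∞)
    (Df : Set (List A)) (f : List A → List B) (S : List A → Set (List B)) : ℕ∞ :=
  if Df ⊆ dom S then ⨆ u ∈ Df, ⨅ v ∈ S u, d (f u) v else ⊤


lemma key_stmt5 {A B ι : Type*} (d : List B → List B → ℕ∞)
    (D : ι → Set (List A)) (f : ι → List A → List B)
    (R S' : List A → Set (List B))
    (hR : ∀ u, R u = {v | ∃ i, u ∈ D i ∧ v = f i u}) :
    ⨆ u ∈ dom R, dirDist d (R u) (S' u) =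
      ⨆ i, ⨆ u ∈ D i, ⨅ v ∈ S' u, d (f i u) v := by
  apply le_antisymm
  · refine iSup₂_le fun u hu => iSup₂_le fun v hv => ?_
    rw [hR] at hv
    obtain ⟨i, hui, rfl⟩ := hv
    exact le_trans (le_iSup₂ (f := fun u (_ : u ∈ D i) => ⨅ v ∈ S' u, d (f i u) v) u hui)
      (le_iSup (fun i => ⨆ u ∈ D i, ⨅ v ∈ S' u, d (f i u) v) i)
  · refine iSup_le fun i => iSup₂_le fun u hu => ?_
    have hmem : f i u ∈ R u := by rw [hR]; exact ⟨i, hu, rfl⟩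
    have hudom : u ∈ dom R := ⟨f i u, hmem⟩
    exact le_trans (le_iSup₂ (f := fun v (_ : v ∈ R u) => ⨅ v' ∈ S' u, d v v') _ hmem)
      (le_iSup₂ (f := fun u (_ : u ∈ dom R) => dirDist d (R u) (S' u)) u hudom)

theorem stmt_5 {A B : Type*} {ι κ : Type*} [Fintype ι] [Nonempty ι] [Fintype κ] [Nonempty κ]
(d : List B → List B → ℕ∞)
    (hd0 : ∀ v v', d v v' = 0 ↔ v = v')
    (hdsymm : ∀ v v', d v v' = d v' v)
    (hdtri : ∀ v v' v'', d v v'' ≤ d v v' + d v' v'')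
    (D : ι → Set (List A)) (f : ι → List A → List B)
    (E : κ → Set (List A)) (g : κ → List A → List B)
    (R S : List A → Set (List B))
    (hR : ∀ u, R u = {v | ∃ i, u ∈ D i ∧ v = f i u})
    (hS : ∀ u, S u = {v | ∃ j, u ∈ E j ∧ v = g j u})
    (hdom : dom R = dom S) :
    relDist d R S =
      max (⨆ i, relativeDist d (D i) (f i) S) (⨆ j, relativeDist d (E j) (g j) R) := by
  have hDsub : ∀ i, D i ⊆ dom S := fun i u hu => hdom ▸ ⟨f i u, by rw [hR]; exact ⟨i, hu, rfl⟩⟩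
  have hEsub : ∀ j, E j ⊆ dom R := fun j u hu => hdom.symm ▸ ⟨g j u, by rw [hS]; exact ⟨j, hu, rfl⟩⟩
  have hsplit : (⨆ u ∈ dom R, hausDist d (R u) (S u)) =
      max (⨆ u ∈ dom R, dirDist d (R u) (S u)) (⨆ u ∈ dom R, dirDist d (S u) (R u)) := by
    apply le_antisymm
    · refine iSup₂_le fun u hu => max_le ?_ ?_
      · exact le_max_of_le_left
          (le_iSup₂ (f := fun u (_ : u ∈ dom R) => dirDist d (R u) (S u)) u hu)
      · exact le_max_of_le_right
          (le_iSup₂ (f := fun u (_ : u ∈ dom R) => dirDist d (S u) (R u)) u hu)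
    · refine max_le (iSup₂_le fun u hu => ?_) (iSup₂_le fun u hu => ?_)
      · exact le_trans (le_max_left _ _)
          (le_iSup₂ (f := fun u (_ : u ∈ dom R) => hausDist d (R u) (S u)) u hu)
      · exact le_trans (le_max_right _ _)
          (le_iSup₂ (f := fun u (_ : u ∈ dom R) => hausDist d (R u) (S u)) u hu)
  have h2 : (⨆ u ∈ dom R, dirDist d (S u) (R u)) = ⨆ u ∈ dom S, dirDist d (S u) (R u) := by
    rw [hdom]
  rw [relDist, if_pos hdom, hsplit, key_stmt5 d D f R S hR, h2, key_stmt5 d E g S R hS]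
  congr 1
  · exact (iSup_congr fun i => by rw [relativeDist, if_pos (hDsub i)]).symm
  · exact (iSup_congr fun j => by rw [relativeDist, if_pos (hEsub j)]).symm
end

section
/- Let ι and κ be finite nonempty types, let (D i, f i) for i : ι and (E j, g j) for j : κ be families of partial word functions, and let R and S be the word relations they define: R u = {v | ∃ i, u ∈ D i ∧ v = f i u} and S u = {v | ∃ j, u ∈ E j ∧ v = g j u}. If dom R = dom S, then for every i : ι, →d(f i, S) ≤ D(R, S), and for every j : κ, →d(g j, R) ≤ D(R, S). -/
open scoped Classical

theorem stmt_6 {A B : Type*} {ι κ : Type*} [Fintype ι] [Nonempty ι] [Fintype κ] [Nonempty κ]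
(d : List B → List B → ℕ∞)
    (hd0 : ∀ v v', d v v' = 0 ↔ v = v')
    (hdsymm : ∀ v v', d v v' = d v' v)
    (hdtri : ∀ v v' v'', d v v'' ≤ d v v' + d v' v'')
    (D : ι → Set (List A)) (f : ι → List A → List B)
    (E : κ → Set (List A)) (g : κ → List A → List B)
    (R S : List A → Set (List B))
    (hR : ∀ u, R u = {v | ∃ i, u ∈ D i ∧ v = f i u})
    (hS : ∀ u, S u = {v | ∃ j, u ∈ E j ∧ v = g j u})
    (hdom : dom R = dom S) :
    (∀ i, relativeDist d (D i) (f i) S ≤ relDist d R S) ∧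
      (∀ j, relativeDist d (E j) (g j) R ≤ relDist d R S) := by
  have hsub : ∀ i, D i ⊆ dom R := fun i u hu => ⟨f i u, by rw [hR]; exact ⟨i, hu, rfl⟩⟩
  have hsub' : ∀ j, E j ⊆ dom S := fun j u hu => ⟨g j u, by rw [hS]; exact ⟨j, hu, rfl⟩⟩
  rw [relDist, if_pos hdom]
  constructor
  · intro i
    rw [relativeDist, if_pos ((hsub i).trans hdom.subset)]
    refine iSup₂_le fun u hu => ?_
    refine le_trans ?_ (le_iSup₂ (f := fun u _ => hausDist d (R u) (S u)) u (hsub i hu))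
    refine le_trans ?_ (le_max_left _ _)
    exact le_iSup₂ (f := fun v _ => ⨅ v' ∈ S u, d v v') (f i u)
      (by rw [hR]; exact ⟨i, hu, rfl⟩)
  · intro j
    rw [relativeDist, if_pos ((hsub' j).trans hdom.ge)]
    refine iSup₂_le fun u hu => ?_
    refine le_trans ?_ (le_iSup₂ (f := fun u _ => hausDist d (R u) (S u)) u
      ((hsub' j).trans hdom.ge hu))
    refine le_trans ?_ (le_max_right _ _)
    exact le_iSup₂ (f := fun v _ => ⨅ v' ∈ R u, d v v') (g j u)
      (by rw [hS]; exact ⟨j, hu, rfl⟩)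
end

section
/- Let ι and κ be finite nonempty types, let (D i, f i) for i : ι and (E j, g j) for j : κ be families of partial word functions, and let R and S be the word relations they define: R u = {v | ∃ i, u ∈ D i ∧ v = f i u} and S u = {v | ∃ j, u ∈ E j ∧ v = g j u}. If dom R = dom S and k : ℕ∞ satisfies →d(f i, S) ≤ k for every i : ι and →d(g j, R) ≤ k for every j : κ, then D(R, S) ≤ k. -/
open scoped Classical

theorem stmt_7 {A B : Type*} {ι κ : Type*} [Fintype ι] [Nonempty ι] [Fintype κ] [Nonempty κ]
(d : List B → List B → ℕ∞)
    (hd0 : ∀ v v', d v v' = 0 ↔ v = v')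
    (hdsymm : ∀ v v', d v v' = d v' v)
    (hdtri : ∀ v v' v'', d v v'' ≤ d v v' + d v' v'')
    (D : ι → Set (List A)) (f : ι → List A → List B)
    (E : κ → Set (List A)) (g : κ → List A → List B)
    (R S : List A → Set (List B))
    (hR : ∀ u, R u = {v | ∃ i, u ∈ D i ∧ v = f i u})
    (hS : ∀ u, S u = {v | ∃ j, u ∈ E j ∧ v = g j u})
    (hdom : dom R = dom S)
    (k : ℕ∞)
    (hf : ∀ i, relativeDist d (D i) (f i) S ≤ k)
    (hg : ∀ j, relativeDist d (E j) (g j) R ≤ k) :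
    relDist d R S ≤ k := by

  by_cases hk : k = ⊤
  · simp [hk]
  have hf' : ∀ i, D i ⊆ dom S ∧ (⨆ u ∈ D i, ⨅ v ∈ S u, d (f i u) v) ≤ k := by
    intro i
    have h := hf i
    unfold relativeDist at h
    split_ifs at h with hsub
    · exact ⟨hsub, h⟩
    · exact absurd (top_le_iff.mp h) hk
  have hg' : ∀ j, E j ⊆ dom R ∧ (⨆ u ∈ E j, ⨅ v ∈ R u, d (g j u) v) ≤ k := by
    intro j
    have h := hg j
    unfold relativeDist at h
    split_ifs at h with hsub
    · exact ⟨hsub, h⟩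
    · exact absurd (top_le_iff.mp h) hk
  unfold relDist
  rw [if_pos hdom]
  refine iSup₂_le fun u hu => ?_
  refine max_le ?_ ?_
  · refine iSup₂_le fun v hv => ?_
    rw [hR u] at hv
    obtain ⟨i, hui, rfl⟩ := hv
    calc (⨅ v' ∈ S u, d (f i u) v') ≤ ⨆ u ∈ D i, ⨅ v ∈ S u, d (f i u) v :=
          le_iSup₂ (f := fun u _ => ⨅ v ∈ S u, d (f i u) v) u hui
      _ ≤ k := (hf' i).2
  · refine iSup₂_le fun v hv => ?_
    rw [hS u] at hv
    obtain ⟨j, huj, rfl⟩ := hv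
    calc (⨅ v' ∈ R u, d (g j u) v') ≤ ⨆ u ∈ E j, ⨅ v ∈ R u, d (g j u) v :=
          le_iSup₂ (f := fun u _ => ⨅ v ∈ R u, d (g j u) v) u huj
      _ ≤ k := (hg' j).2
end
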